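/- Let $a, b > 0$ with $b > a$, let $h : (0,\infty) \to (0,\infty)$ be measurable and regularly varying of index $b$, and let $f : (0,\infty) \to \mathbb{R}$ be differentiable with $f'(r) = \frac{a + \varepsilon_1(r)}{r} f(r) + \frac{A + \varepsilon_2(r)}{r} h(r)$ for some constant $A \in \mathbb{R}$ and functions $\varepsilon_1, \varepsilon_2 \to 0$ as $r \to \infty$. If $|f(r)| = O(h(r))$ as $r \to \infty$, then $f(r) / h(r) \to \frac{A}{b - a}$ as $r \to \infty$. -/

import Mathlib

open Real Filter Asymptotics

open MeasureTheory

lemma uct_log (ℓ : ℝ → ℝ) (hm : Measurable ℓ) (b K : ℝ) (hK : 0 < K)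
    (hconv : ∀ u : ℝ, Tendsto (fun z => ℓ (z + u) - ℓ z) atTop (nhds (b * u)))
    (ε : ℝ) (hε : 0 < ε) :
    ∀ᶠ z in atTop, ∀ u ∈ Set.Icc (0:ℝ) K, |ℓ (z + u) - ℓ z - b * u| ≤ ε := by
  by_contra hcon
  rw [Filter.not_eventually] at hcon
  have hseq : ∀ m : ℕ, ∃ z : ℝ, (m:ℝ) ≤ z ∧ ∃ u ∈ Set.Icc (0:ℝ) K,
      ε < |ℓ (z + u) - ℓ z - b * u| := by
    intro m
    obtain ⟨z, hz, hbad⟩ := hcon.forall_exists_of_atTop (m:ℝ)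
    push_neg at hbad
    obtain ⟨u, hu, h2⟩ := hbad
    exact ⟨z, hz, u, hu, h2⟩
  choose x hx u hu hbad using hseq
  set Δ : ℝ → ℝ → ℝ := fun y w => ℓ (y + w) - ℓ y - b * w with hΔdef
  have hΔm : ∀ y : ℝ, Measurable (fun w => Δ y w) := by
    intro y
    exact ((hm.comp (measurable_const.add measurable_id)).sub measurable_const).sub
      (measurable_const.mul measurable_id)
  have hxlim : Tendsto x atTop atTop :=
    tendsto_atTop_mono hx tendsto_natCast_atTop_atTop
  have key : ∀ (y : ℕ → ℝ), Tendsto y atTop atTop → ∀ L : ℝ, 0 < L →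
      ∃ n : ℕ, volume (Set.Icc (0:ℝ) L \ ⋂ (m : ℕ) (_ : n ≤ m), {w | |Δ (y m) w| ≤ ε/2})
        < ENNReal.ofReal (1/2) := by
    intro y hy L hL
    set G : ℕ → Set ℝ := fun n => ⋂ (m : ℕ) (_ : n ≤ m), {w | |Δ (y m) w| ≤ ε/2} with hG
    have hGmeas : ∀ n, MeasurableSet (G n) := fun n =>
      MeasurableSet.iInter fun m => MeasurableSet.iInter fun _ =>
        measurableSet_le (hΔm (y m)).abs measurable_const
    have hmono : Antitone (fun n => Set.Icc (0:ℝ) L \ G n) := by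
      intro n n' hnn'
      apply Set.diff_subset_diff_right
      intro w hw
      simp only [hG, Set.mem_iInter] at hw ⊢
      intro m hm'; exact hw m (le_trans hnn' hm')
    have hempty : ⋂ n, (Set.Icc (0:ℝ) L \ G n) = ∅ := by
      ext w
      simp only [Set.mem_iInter, Set.mem_diff, Set.mem_empty_iff_false, iff_false, not_forall]
      by_cases hwI : w ∈ Set.Icc (0:ℝ) L
      · have h1 : Tendsto (fun m => Δ (y m) w) atTop (nhds 0) := by
          have h2 := ((hconv w).sub_const (b * w)).comp hy
          simpa [hΔdef, Function.comp_def] using h2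
        have h3 : ∀ᶠ m in atTop, |Δ (y m) w| < ε/2 := by
          have := h1.abs
          simp only [abs_zero] at this
          exact this.eventually_lt_const (by linarith)
        obtain ⟨n, hn⟩ := eventually_atTop.mp h3
        refine ⟨n, ?_⟩
        intro hcontra
        have : w ∈ G n := by
          simp only [hG, Set.mem_iInter]
          intro m hm'; exact le_of_lt (hn m hm')
        exact hcontra.2 this
      · exact ⟨0, fun hcontra => hwI hcontra.1⟩
    have hfin : volume (Set.Icc (0:ℝ) L \ G 0) ≠ ⊤ := by
      apply ne_of_lt
      exact lt_of_le_of_lt (measure_mono Set.diff_subset)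
        (by rw [Real.volume_Icc]; exact ENNReal.ofReal_lt_top)
    have htend := MeasureTheory.tendsto_measure_iInter_atTop
      (μ := volume) (s := fun n => Set.Icc (0:ℝ) L \ G n)
      (fun n => ((measurableSet_Icc.diff (hGmeas n)).nullMeasurableSet))
      hmono ⟨0, hfin⟩
    rw [hempty, measure_empty] at htend
    have := htend.eventually_lt_const (ENNReal.ofReal_pos.mpr (by norm_num : (0:ℝ) < 1/2))
    exact this.exists
  obtain ⟨n₁, hn₁⟩ := key x hxlim (K + 2) (by linarith)
  have hylim : Tendsto (fun m => x m + u m) atTop atTop :=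
    tendsto_atTop_mono (fun m => le_add_of_nonneg_right (hu m).1) hxlim
  obtain ⟨n₂, hn₂⟩ := key (fun m => x m + u m) hylim 2 (by norm_num)
  set n := max n₁ n₂ with hn
  set E : Set ℝ := ⋂ (m : ℕ) (_ : n ≤ m), {w | |Δ (x m) w| ≤ ε/2} with hE
  set F : Set ℝ := ⋂ (m : ℕ) (_ : n ≤ m), {w | |Δ (x m + u m) w| ≤ ε/2} with hF
  have hEsub : (⋂ (m : ℕ) (_ : n₁ ≤ m), {w | |Δ (x m) w| ≤ ε/2}) ⊆ E := by
    intro w hw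
    simp only [hE, Set.mem_iInter] at hw ⊢
    intro m hm'; exact hw m (le_trans (le_max_left _ _) hm')
  have hFsub : (⋂ (m : ℕ) (_ : n₂ ≤ m), {w | |Δ (x m + u m) w| ≤ ε/2}) ⊆ F := by
    intro w hw
    simp only [hF, Set.mem_iInter] at hw ⊢
    intro m hm'; exact hw m (le_trans (le_max_right _ _) hm')
  have hEm : volume (Set.Icc (0:ℝ) (K+2) \ E) < ENNReal.ofReal (1/2) :=
    lt_of_le_of_lt (measure_mono (Set.diff_subset_diff_right hEsub)) hn₁
  have hFm : volume (Set.Icc (0:ℝ) 2 \ F) < ENNReal.ofReal (1/2) :=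
    lt_of_le_of_lt (measure_mono (Set.diff_subset_diff_right hFsub)) hn₂
  -- P : translates of E
  set P : Set ℝ := (fun w => u n + w) ⁻¹' E with hP
  have hPm : volume (Set.Icc (0:ℝ) 2 \ P) < ENNReal.ofReal (1/2) := by
    have hsub : Set.Icc (0:ℝ) 2 \ P ⊆ (fun w => u n + w) ⁻¹' (Set.Icc (0:ℝ) (K+2) \ E) := by
      intro w hw
      obtain ⟨hw1, hw2⟩ := hw
      refine ⟨⟨?_, ?_⟩, hw2⟩
      · have := (hu n).1; have := hw1.1; positivity
      · have := (hu n).2; have := hw1.2; dsimp; linarith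
    calc volume (Set.Icc (0:ℝ) 2 \ P) ≤ volume ((fun w => u n + w) ⁻¹' (Set.Icc (0:ℝ) (K+2) \ E)) :=
          measure_mono hsub
      _ = volume (Set.Icc (0:ℝ) (K+2) \ E) := MeasureTheory.measure_preimage_add _ _ _
      _ < ENNReal.ofReal (1/2) := hEm
  -- nonemptiness of Icc ∩ F ∩ P
  have hne : (Set.Icc (0:ℝ) 2 ∩ F ∩ P).Nonempty := by
    by_contra hemp
    rw [Set.not_nonempty_iff_eq_empty] at hemp
    have hsub : Set.Icc (0:ℝ) 2 ⊆ (Set.Icc (0:ℝ) 2 \ F) ∪ (Set.Icc (0:ℝ) 2 \ P) := by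
      intro w hw
      by_cases hwF : w ∈ F
      · by_cases hwP : w ∈ P
        · exfalso
          have : w ∈ Set.Icc (0:ℝ) 2 ∩ F ∩ P := ⟨⟨hw, hwF⟩, hwP⟩
          rw [hemp] at this; exact this
        · exact Or.inr ⟨hw, hwP⟩
      · exact Or.inl ⟨hw, hwF⟩
    have h1 : volume (Set.Icc (0:ℝ) 2) ≤ ENNReal.ofReal (1/2) + ENNReal.ofReal (1/2) :=
      le_trans (measure_mono hsub) (le_trans (measure_union_le _ _)
        (add_le_add hFm.le hPm.le))
    rw [Real.volume_Icc, ← ENNReal.ofReal_add (by norm_num) (by norm_num)] at h1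
    rw [ENNReal.ofReal_le_ofReal_iff (by norm_num)] at h1
    norm_num at h1
  obtain ⟨w, ⟨⟨hwI, hwF⟩, hwP⟩⟩ := hne
  have h1 : |Δ (x n + u n) w| ≤ ε/2 := by
    simp only [hF, Set.mem_iInter] at hwF
    exact hwF n le_rfl
  have h2 : |Δ (x n) (u n + w)| ≤ ε/2 := by
    simp only [hP, hE, Set.mem_preimage, Set.mem_iInter] at hwP
    exact hwP n le_rfl
  have hkey : Δ (x n) (u n) = Δ (x n) (u n + w) - Δ (x n + u n) w := by
    simp only [hΔdef]
    have : x n + (u n + w) = x n + u n + w := by ring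
    rw [this]; ring
  have : |Δ (x n) (u n)| ≤ ε := by
    rw [hkey]
    calc |Δ (x n) (u n + w) - Δ (x n + u n) w| ≤ |Δ (x n) (u n + w)| + |Δ (x n + u n) w| :=
      abs_sub _ _
      _ ≤ ε/2 + ε/2 := add_le_add h2 h1
      _ = ε := by ring
  exact absurd this (not_le.mpr (hbad n))

lemma uct_h (b : ℝ) (hb : 0 < b) (h : ℝ → ℝ) (hh_pos : ∀ r > (0:ℝ), 0 < h r)
    (hh_meas : Measurable h)
    (hh_rv : ∀ lam > (0:ℝ), Tendsto (fun r => h (lam * r) / h r) atTop (nhds (lam ^ b)))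
    (ε : ℝ) (hε : 0 < ε) :
    ∀ᶠ r in atTop, ∀ t ∈ Set.Icc (1:ℝ) 2, |h (t * r) / h r - t ^ b| ≤ ε := by
  set ℓ : ℝ → ℝ := fun z => Real.log (h (Real.exp z)) with hℓ
  have hm : Measurable ℓ := (hh_meas.comp measurable_exp).log
  have hconv : ∀ u : ℝ, Tendsto (fun z => ℓ (z + u) - ℓ z) atTop (nhds (b * u)) := by
    intro u
    have hlam : (0:ℝ) < Real.exp u := Real.exp_pos u
    have step1 : Tendsto (fun z => h (Real.exp u * Real.exp z) / h (Real.exp z)) atTop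
        (nhds ((Real.exp u) ^ b)) := (hh_rv _ hlam).comp Real.tendsto_exp_atTop
    have hpos : (0:ℝ) < (Real.exp u) ^ b := Real.rpow_pos_of_pos hlam b
    have step2 := ((Real.continuousAt_log (ne_of_gt hpos)).tendsto).comp step1
    have heq : Real.log ((Real.exp u) ^ b) = b * u := by
      rw [Real.log_rpow hlam, Real.log_exp]
    rw [heq] at step2
    apply step2.congr
    intro z
    have h1 : (0:ℝ) < h (Real.exp u * Real.exp z) :=
      hh_pos _ (by positivity)
    have h2 : (0:ℝ) < h (Real.exp z) := hh_pos _ (Real.exp_pos z)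
    simp only [Function.comp, hℓ]
    rw [Real.exp_add, mul_comm (Real.exp z) (Real.exp u),
      Real.log_div (ne_of_gt h1) (ne_of_gt h2)]
  set B : ℝ := (2:ℝ) ^ b with hB
  have hBpos : 0 < B := Real.rpow_pos_of_pos (by norm_num) b
  set ε₀ : ℝ := min 1 (ε / (2 * B)) with hε₀
  have hε₀pos : 0 < ε₀ := lt_min one_pos (by positivity)
  have huct := uct_log ℓ hm b (Real.log 2) (Real.log_pos one_lt_two) hconv ε₀ hε₀pos
  have huct' := Real.tendsto_log_atTop.eventually huct
  filter_upwards [huct', eventually_gt_atTop (0:ℝ)] with r hr hr0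
  intro t ht
  have ht0 : (0:ℝ) < t := lt_of_lt_of_le one_pos ht.1
  have hu : Real.log t ∈ Set.Icc (0:ℝ) (Real.log 2) :=
    ⟨Real.log_nonneg ht.1, Real.log_le_log ht0 ht.2⟩
  have key := hr (Real.log t) hu
  have hexp : Real.exp (Real.log r + Real.log t) = t * r := by
    rw [Real.exp_add, Real.exp_log hr0, Real.exp_log ht0, mul_comm]
  have htr : (0:ℝ) < h (t * r) := hh_pos _ (by positivity)
  have hhr : (0:ℝ) < h r := hh_pos _ hr0
  have hkey : |Real.log (h (t * r)) - Real.log (h r) - b * Real.log t| ≤ ε₀ := by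
    have : ℓ (Real.log r + Real.log t) = Real.log (h (t * r)) := by
      simp only [hℓ]; rw [hexp]
    rw [this] at key
    have : ℓ (Real.log r) = Real.log (h r) := by
      simp only [hℓ]; rw [Real.exp_log hr0]
    rw [this] at key
    exact key
  set θ : ℝ := Real.log (h (t * r)) - Real.log (h r) - b * Real.log t with hθ
  have hratio : h (t * r) / h r = Real.exp θ * t ^ b := by
    have h1 : h (t * r) / h r = Real.exp (Real.log (h (t*r)) - Real.log (h r)) := by
      rw [Real.exp_sub, Real.exp_log htr, Real.exp_log hhr]
    have h2 : t ^ b = Real.exp (b * Real.log t) := by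
      rw [Real.rpow_def_of_pos ht0, mul_comm]
    rw [h1, h2, ← Real.exp_add, hθ]
    ring_nf
  have htb : t ^ b ≤ B := Real.rpow_le_rpow (le_of_lt ht0) ht.2 (le_of_lt hb)
  have htbpos : 0 < t ^ b := Real.rpow_pos_of_pos ht0 b
  rw [hratio]
  have : Real.exp θ * t ^ b - t ^ b = t ^ b * (Real.exp θ - 1) := by ring
  rw [this, abs_mul, abs_of_pos htbpos]
  have habs : |Real.exp θ - 1| ≤ 2 * |θ| :=
    Real.abs_exp_sub_one_le (le_trans hkey (min_le_left _ _))
  have hθε : |θ| ≤ ε / (2 * B) := le_trans hkey (min_le_right _ _)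
  calc t ^ b * |Real.exp θ - 1| ≤ B * (2 * (ε / (2 * B))) := by
        apply mul_le_mul htb (le_trans habs (by linarith)) (abs_nonneg _) (le_of_lt hBpos)
      _ = ε := by field_simp

lemma iterate_contract (v : ℝ → ℝ) (κ C : ℝ) (hκ0 : 0 < κ) (hκ1 : κ < 1) (hC : 0 < C)
    (hbd : ∀ᶠ r in atTop, |v r| ≤ C)
    (hrec : ∀ δ > (0:ℝ), ∀ᶠ r in atTop, |v (2 * r)| ≤ κ * |v r| + δ) :
    Tendsto v atTop (nhds 0) := by
  have H : ∀ η > (0:ℝ), ∀ᶠ r in atTop, |v r| ≤ η := by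
    intro η hη
    set δ : ℝ := η * (1 - κ) / 2 with hδ
    have hδpos : 0 < δ := by have : 0 < 1 - κ := by linarith
                             positivity
    have hδκ : δ / (1 - κ) = η / 2 := by
      rw [hδ, div_eq_div_iff (ne_of_gt (by linarith : (0:ℝ) < 1 - κ)) (by norm_num : (2:ℝ) ≠ 0)]
      ring
    obtain ⟨R₀, hR₀⟩ := eventually_atTop.mp (hbd.and (hrec δ hδpos))
    set R : ℝ := max R₀ 1 with hRdef
    have hR1 : (1:ℝ) ≤ R := le_max_right _ _
    have hRpos : (0:ℝ) < R := lt_of_lt_of_le one_pos hR1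
    have hR : ∀ r, R ≤ r → |v r| ≤ C ∧ |v (2 * r)| ≤ κ * |v r| + δ :=
      fun r hr => hR₀ r (le_trans (le_max_left _ _) hr)
    have claim : ∀ n : ℕ, ∀ s : ℝ, R * 2 ^ n ≤ s → s ≤ R * 2 ^ (n + 1) →
        |v s| ≤ κ ^ n * C + δ / (1 - κ) := by
      intro n
      induction n with
      | zero =>
        intro s hs1 _
        have hsR : R ≤ s := by simpa using hs1
        have := (hR s hsR).1
        have hpos : 0 ≤ δ / (1 - κ) := by
          apply div_nonneg hδpos.le; linarith
        simp only [pow_zero, one_mul]; linarith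
      | succ n ih =>
        intro s hs1 hs2
        have h2n : (1:ℝ) ≤ 2 ^ n := one_le_pow₀ (by norm_num)
        have hs2R : R * 2 ^ n ≤ s / 2 := by
          rw [le_div_iff₀ (by norm_num : (0:ℝ) < 2)]
          calc R * 2 ^ n * 2 = R * 2 ^ (n + 1) := by ring
            _ ≤ s := hs1
        have hs2R' : s / 2 ≤ R * 2 ^ (n + 1) := by
          rw [div_le_iff₀ (by norm_num : (0:ℝ) < 2)]
          calc s ≤ R * 2 ^ (n + 2) := hs2
            _ = R * 2 ^ (n + 1) * 2 := by ring
        have hsR : R ≤ s / 2 := le_trans (le_mul_of_one_le_right hRpos.le h2n) hs2R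
        have h1 := (hR (s / 2) hsR).2
        have h2 : 2 * (s / 2) = s := by ring
        rw [h2] at h1
        have h3 := ih (s / 2) hs2R hs2R'
        have h4 : κ * (κ ^ n * C + δ / (1 - κ)) + δ = κ ^ (n + 1) * C + δ / (1 - κ) := by
          have h1κ : (1:ℝ) - κ ≠ 0 := ne_of_gt (by linarith)
          field_simp
          ring
        calc |v s| ≤ κ * |v (s / 2)| + δ := h1
          _ ≤ κ * (κ ^ n * C + δ / (1 - κ)) + δ := by nlinarith [abs_nonneg (v (s/2))]
          _ = κ ^ (n + 1) * C + δ / (1 - κ) := h4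
    obtain ⟨N, hN⟩ := ((tendsto_pow_atTop_nhds_zero_of_lt_one hκ0.le hκ1).eventually_lt_const
      (show (0:ℝ) < η / 2 / C by positivity)).exists
    filter_upwards [eventually_ge_atTop (R * 2 ^ N)] with s hs
    have hsR : (2:ℝ) ^ N ≤ s / R := by
      rw [le_div_iff₀ hRpos]; linarith [hs]
    have hs1 : (1:ℝ) ≤ s / R := le_trans (one_le_pow₀ (by norm_num)) hsR
    have hsRpos : (0:ℝ) < s / R := lt_of_lt_of_le one_pos hs1
    set n : ℕ := Nat.floor (Real.logb 2 (s / R)) with hn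
    have hlogN : (N:ℝ) ≤ Real.logb 2 (s / R) := by
      calc (N:ℝ) = Real.logb 2 ((2:ℝ) ^ (N:ℝ)) := by
            rw [Real.logb_rpow (by norm_num) (by norm_num)]
        _ ≤ Real.logb 2 (s / R) := by
            rw [← Real.rpow_natCast 2 N] at hsR
            exact Real.logb_le_logb_of_le (by norm_num) (by positivity) hsR
    have hlognn : (0:ℝ) ≤ Real.logb 2 (s / R) := le_trans (Nat.cast_nonneg N) hlogN
    have hnN : N ≤ n := Nat.le_floor hlogN
    have hlow : R * 2 ^ n ≤ s := by
      have h1 : (2:ℝ) ^ (n:ℝ) ≤ (2:ℝ) ^ Real.logb 2 (s / R) :=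
        Real.rpow_le_rpow_of_exponent_le (by norm_num) (Nat.floor_le hlognn)
      rw [Real.rpow_logb (by norm_num) (by norm_num) hsRpos, Real.rpow_natCast] at h1
      calc R * 2 ^ n ≤ R * (s / R) := by nlinarith
        _ = s := by field_simp
    have hhigh : s ≤ R * 2 ^ (n + 1) := by
      have h1 : (2:ℝ) ^ Real.logb 2 (s / R) ≤ (2:ℝ) ^ ((n:ℝ) + 1) :=
        Real.rpow_le_rpow_of_exponent_le (by norm_num) (le_of_lt (Nat.lt_floor_add_one _))
      rw [Real.rpow_logb (by norm_num) (by norm_num) hsRpos] at h1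
      have h2 : (2:ℝ) ^ ((n:ℝ) + 1) = (2:ℝ) ^ (n + 1 : ℕ) := by
        rw [← Real.rpow_natCast 2 (n+1)]
        norm_num
      rw [h2] at h1
      calc s = R * (s / R) := by field_simp
        _ ≤ R * 2 ^ (n + 1) := by nlinarith
    have h5 := claim n s hlow hhigh
    have h6 : κ ^ n ≤ κ ^ N := pow_le_pow_of_le_one hκ0.le hκ1.le hnN
    have h7 : κ ^ N * C ≤ η / 2 := by
      have := hN
      calc κ ^ N * C ≤ (η / 2 / C) * C := by nlinarith [pow_nonneg hκ0.le N]
        _ = η / 2 := by field_simp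
    have h8 : κ ^ n * C ≤ η / 2 := le_trans (by nlinarith [pow_nonneg hκ0.le n]) h7
    rw [hδκ] at h5
    linarith
  rw [Metric.tendsto_nhds]
  intro ε hε
  filter_upwards [H (ε / 2) (by linarith)] with r hr
  rw [Real.dist_eq, sub_zero]
  linarith

set_option maxHeartbeats 1000000 in
theorem signed_ode_analysis (a b : ℝ) (ha : 0 < a) (hab : a < b)
    (h : ℝ → ℝ) (hh_pos : ∀ r > (0:ℝ), 0 < h r) (hh_meas : Measurable h)
    (hh_rv : ∀ lam > (0:ℝ), Tendsto (fun r => h (lam * r) / h r) atTop (nhds (lam ^ b)))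
    (A : ℝ) (ε₁ ε₂ : ℝ → ℝ)
    (hε₁ : Tendsto ε₁ atTop (nhds 0)) (hε₂ : Tendsto ε₂ atTop (nhds 0))
    (f : ℝ → ℝ)
    (hode : ∀ r > (0:ℝ), HasDerivAt f ((a + ε₁ r) / r * f r + (A + ε₂ r) / r * h r) r)
    (hbound : f =O[atTop] h) :
    Tendsto (fun r => f r / h r) atTop (nhds (A / (b - a))) := by
  have hb0 : (0:ℝ) < b := lt_trans ha hab
  have hba : (0:ℝ) < b - a := by linarith
  -- constants
  set c : ℝ := A / (b - a) with hc
  set κ : ℝ := (2:ℝ) ^ (a - b) with hκ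
  have hκ0 : 0 < κ := Real.rpow_pos_of_pos (by norm_num) _
  have hκ1 : κ < 1 := Real.rpow_lt_one_of_one_lt_of_neg one_lt_two (by linarith)
  set B : ℝ := (2:ℝ) ^ b with hB
  have hBpos : 0 < B := Real.rpow_pos_of_pos (by norm_num) _
  have hB1 : 1 < B := by
    rw [hB]
    exact Real.one_lt_rpow_iff_of_pos (by norm_num) |>.mpr (Or.inl ⟨one_lt_two, hb0⟩)
  set I' : ℝ := ((2:ℝ) ^ (b - a) - 1) / (b - a) with hI'
  have h2ba : (1:ℝ) < (2:ℝ) ^ (b - a) :=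
    Real.one_lt_rpow_iff_of_pos (by norm_num) |>.mpr (Or.inl ⟨one_lt_two, hba⟩)
  have hI'pos : 0 < I' := div_pos (by linarith) hba
  -- C bound
  obtain ⟨C₀, hC₀⟩ := hbound.bound
  set C : ℝ := max C₀ 1 with hCdef
  have hC1 : (1:ℝ) ≤ C := le_max_right _ _
  have hCpos : (0:ℝ) < C := lt_of_lt_of_le one_pos hC1
  have hfb : ∀ᶠ r in atTop, |f r| ≤ C * h r := by
    filter_upwards [hC₀, eventually_gt_atTop (0:ℝ)] with r hr hr0
    rw [Real.norm_eq_abs, Real.norm_eq_abs, abs_of_pos (hh_pos r hr0)] at hr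
    calc |f r| ≤ C₀ * h r := hr
      _ ≤ C * h r := by
          have := (hh_pos r hr0).le
          nlinarith [le_max_left C₀ (1:ℝ)]
  set u : ℝ → ℝ := fun r => f r / h r with hu
  set v : ℝ → ℝ := fun r => u r - c with hv
  have hub : ∀ᶠ r in atTop, |u r| ≤ C := by
    filter_upwards [hfb, eventually_gt_atTop (0:ℝ)] with r hr hr0
    have hhr := hh_pos r hr0
    rw [hu]
    rw [abs_div, abs_of_pos hhr, div_le_iff₀ hhr]
    exact hr
  -- the key recursion estimate
  have hkeyrec : ∀ δ > (0:ℝ), ∀ᶠ r in atTop, |v (2 * r) - κ * v r| ≤ δ := by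
    intro δ hδ
    set K₁ : ℝ := (C + 1) * (B + 1) + |A| with hK₁
    have hK₁pos : 0 < K₁ := by positivity
    set K₂ : ℝ := (2:ℝ) ^ a * 2 / (B * B) with hK₂
    have hK₂pos : 0 < K₂ := by positivity
    set K₃ : ℝ := K₂ * (C + |A| * I' + K₁) + K₁ with hK₃
    have hK₃pos : 0 < K₃ := by positivity
    set ε' : ℝ := min 1 (min (B / 2) (δ / K₃)) with hε'
    have hε'pos : 0 < ε' := lt_min one_pos (lt_min (by positivity) (by positivity))
    have hε'1 : ε' ≤ 1 := min_le_left _ _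
    have hε'B : ε' ≤ B / 2 := le_trans (min_le_right _ _) (min_le_left _ _)
    have hε'δ : ε' ≤ δ / K₃ := le_trans (min_le_right _ _) (min_le_right _ _)
    have huct := uct_h b hb0 h hh_pos hh_meas hh_rv ε' hε'pos
    have hε₁' : ∀ᶠ r in atTop, |ε₁ r| ≤ ε' := by
      have := hε₁.abs; simp only [abs_zero] at this
      exact this.eventually_le_const hε'pos
    have hε₂' : ∀ᶠ r in atTop, |ε₂ r| ≤ ε' := by
      have := hε₂.abs; simp only [abs_zero] at this
      exact this.eventually_le_const hε'pos
    obtain ⟨R₀, hR₀⟩ := eventually_atTop.mp (huct.and (hε₁'.and (hε₂'.and hfb)))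
    set R : ℝ := max R₀ 1 with hRdef
    have hR1 : (1:ℝ) ≤ R := le_max_right _ _
    have hRa : ∀ s, R ≤ s → (∀ t ∈ Set.Icc (1:ℝ) 2, |h (t * s) / h s - t ^ b| ≤ ε')
        ∧ |ε₁ s| ≤ ε' ∧ |ε₂ s| ≤ ε' ∧ |f s| ≤ C * h s :=
      fun s hs => hR₀ s (le_trans (le_max_left _ _) hs)
    filter_upwards [eventually_ge_atTop R, hub] with r hrR hXC
    have hr0 : (0:ℝ) < r := lt_of_lt_of_le one_pos (le_trans hR1 hrR)
    have hhr : 0 < h r := hh_pos r hr0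
    have hh2r : 0 < h (2 * r) := hh_pos _ (by positivity)
    -- uniform bounds on [r, 2r]
    have happrox : ∀ s, r ≤ s → s ≤ 2 * r → |h s - (s / r) ^ b * h r| ≤ ε' * h r := by
      intro s hs1 hs2
      have ht : s / r ∈ Set.Icc (1:ℝ) 2 := by
        constructor
        · rw [le_div_iff₀ hr0]; linarith
        · rw [div_le_iff₀ hr0]; linarith
      have := ((hRa r hrR).1) (s / r) ht
      rw [div_mul_cancel₀ _ (ne_of_gt hr0)] at this
      have heq : h s / h r - (s / r) ^ b = (h s - (s / r) ^ b * h r) / h r := by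
        field_simp
      rw [heq, abs_div, abs_of_pos hhr, div_le_iff₀ hhr] at this
      exact this
    have hub' : ∀ s, r ≤ s → s ≤ 2 * r → h s ≤ (B + 1) * h r := by
      intro s hs1 hs2
      have h1 := happrox s hs1 hs2
      have hsr : (0:ℝ) < s / r := div_pos (lt_of_lt_of_le hr0 hs1) hr0
      have h2 : (s / r) ^ b ≤ B := by
        rw [hB]
        apply Real.rpow_le_rpow hsr.le _ hb0.le
        rw [div_le_iff₀ hr0]; linarith
      have h3 := abs_le.mp h1
      nlinarith [hhr, hε'1]
    -- FTC setup
    set g : ℝ → ℝ := fun s => s ^ (-a - 1) * (ε₁ s * f s + (A + ε₂ s) * h s) with hg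
    set G : ℝ → ℝ := fun s => s ^ (-a - 1) * (s * deriv f s - a * f s) with hG
    have hr2 : r ≤ 2 * r := by linarith
    have hgG : ∀ s, r ≤ s → s ≤ 2 * r → g s = G s := by
      intro s hs1 hs2
      have hs0 : (0:ℝ) < s := lt_of_lt_of_le hr0 hs1
      have hd := hode s hs0
      have hderiv : deriv f s = (a + ε₁ s) / s * f s + (A + ε₂ s) / s * h s := hd.deriv
      simp only [hG, hg]
      rw [hderiv]
      field_simp
      try ring
      try exact Or.inl trivial
    have hp : ∀ s ∈ Set.uIcc r (2 * r), HasDerivAt (fun y : ℝ => f y * y ^ (-a)) (g s) s := by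
      intro s hs
      rw [Set.uIcc_of_le hr2] at hs
      have hs0 : (0:ℝ) < s := lt_of_lt_of_le hr0 hs.1
      have hd := hode s hs0
      have hrp : HasDerivAt (fun x : ℝ => x ^ (-a)) (-a * s ^ (-a - 1)) s :=
        Real.hasDerivAt_rpow_const (Or.inl (ne_of_gt hs0))
      have := hd.mul hrp
      refine this.congr_deriv ?_
      have hpow : s ^ (-a) = s ^ (-a - 1) * s := by
        rw [← Real.rpow_add_one (ne_of_gt hs0)]
        ring_nf
      rw [hg, hpow]
      field_simp
      ring
    -- integrability of g
    have hGList : IntegrableOn G (Set.Ioc r (2 * r)) volume := by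
      have hmes : AEStronglyMeasurable G (volume.restrict (Set.Ioc r (2 * r))) := by
        apply AEStronglyMeasurable.mul
        · apply ContinuousOn.aestronglyMeasurable _ measurableSet_Ioc
          intro s hs
          exact (Real.continuousAt_rpow_const s (-a - 1)
            (Or.inl (ne_of_gt (lt_trans hr0 hs.1)))).continuousWithinAt
        · apply AEStronglyMeasurable.sub
          · exact (measurable_id.mul (measurable_deriv f)).aestronglyMeasurable
          · apply AEStronglyMeasurable.const_mul
            apply ContinuousOn.aestronglyMeasurable _ measurableSet_Ioc
            intro s hs
            exact ((hode s (lt_trans hr0 hs.1)).differentiableAt.continuousAt).continuousWithinAt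
      apply Integrable.mono' (g := fun _ => r ^ (-a - 1) * ((C + |A| + 1) * ((B + 1) * h r)))
        (integrableOn_const measure_Ioc_lt_top.ne) hmes
      rw [ae_restrict_iff' measurableSet_Ioc]
      apply Eventually.of_forall
      intro s hs
      have hs0 : (0:ℝ) < s := lt_trans hr0 hs.1
      have hsR : R ≤ s := le_trans hrR hs.1.le
      obtain ⟨-, he1, he2, hfs⟩ := hRa s hsR
      rw [Real.norm_eq_abs, ← hgG s hs.1.le hs.2]
      have hhs : 0 < h s := hh_pos s hs0
      have hhsb : h s ≤ (B + 1) * h r := hub' s hs.1.le hs.2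
      have hgb : |g s| ≤ s ^ (-a - 1) * ((C + |A| + 1) * h s) := by
        simp only [hg]
        rw [abs_mul, abs_of_pos (Real.rpow_pos_of_pos hs0 _)]
        apply mul_le_mul_of_nonneg_left _ (Real.rpow_pos_of_pos hs0 _).le
        calc |ε₁ s * f s + (A + ε₂ s) * h s| ≤ |ε₁ s| * |f s| + (|A| + |ε₂ s|) * h s := by
              refine le_trans (abs_add_le _ _) ?_
              rw [abs_mul, abs_mul, abs_of_pos hhs]
              exact add_le_add_right (mul_le_mul_of_nonneg_right (abs_add_le _ _) hhs.le) _
          _ ≤ 1 * (C * h s) + (|A| + 1) * h s := by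
              have h1 : |ε₁ s| * |f s| ≤ 1 * (C * h s) :=
                mul_le_mul (le_trans he1 hε'1) hfs (abs_nonneg _) zero_le_one
              have h2 : (|A| + |ε₂ s|) * h s ≤ (|A| + 1) * h s :=
                mul_le_mul_of_nonneg_right (by linarith [le_trans he2 hε'1]) hhs.le
              linarith
          _ = (C + |A| + 1) * h s := by ring
      calc |g s| ≤ s ^ (-a - 1) * ((C + |A| + 1) * h s) := hgb
        _ ≤ r ^ (-a - 1) * ((C + |A| + 1) * ((B + 1) * h r)) := by
            have h1 : s ^ (-a - 1) ≤ r ^ (-a - 1) :=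
              Real.rpow_le_rpow_of_nonpos hr0 hs.1.le (by linarith)
            have h2 : (0:ℝ) < s ^ (-a-1) := Real.rpow_pos_of_pos hs0 _
            have h3 : (C + |A| + 1) * h s ≤ (C + |A| + 1) * ((B + 1) * h r) :=
              mul_le_mul_of_nonneg_left hhsb (by positivity)
            exact mul_le_mul h1 h3 (mul_nonneg (by positivity) hhs.le)
              (Real.rpow_pos_of_pos hr0 _).le
    have hgInt : IntervalIntegrable g volume r (2 * r) := by
      rw [intervalIntegrable_iff, Set.uIoc_of_le hr2]
      exact hGList.congr_fun (fun s hs => (hgG s hs.1.le hs.2).symm) measurableSet_Ioc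
    -- FTC
    have hFTC : ∫ s in r..(2*r), g s = f (2*r) * (2*r) ^ (-a) - f r * r ^ (-a) :=
      intervalIntegral.integral_eq_sub_of_hasDerivAt hp hgInt
    -- comparison integrand
    set ψ : ℝ → ℝ := fun s => (A * h r * r ^ (-b)) * s ^ (b - a - 1) with hψ
    have hψInt : IntervalIntegrable ψ volume r (2 * r) :=
      (intervalIntegral.intervalIntegrable_rpow' (by linarith)).const_mul _
    have hψval : ∫ s in r..(2*r), ψ s = A * h r * r ^ (-a) * I' := by
      simp only [hψ]
      rw [intervalIntegral.integral_const_mul, integral_rpow (Or.inl (by linarith))]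
      have he : b - a - 1 + 1 = b - a := by ring
      rw [he]
      have h2r : ((2:ℝ) * r) ^ (b - a) = 2 ^ (b - a) * r ^ (b - a) :=
        Real.mul_rpow (by norm_num) hr0.le
      rw [h2r]
      have hra : r ^ (-b) * r ^ (b - a) = r ^ (-a) := by
        rw [← Real.rpow_add hr0]; ring_nf
      calc A * h r * r ^ (-b) * ((2 ^ (b - a) * r ^ (b - a) - r ^ (b - a)) / (b - a))
          = A * h r * (r ^ (-b) * r ^ (b - a)) * ((2 ^ (b - a) - 1) / (b - a)) := by ring
        _ = A * h r * r ^ (-a) * I' := by rw [hra, hI']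
    -- pointwise difference bound
    have hdiffbd : ∀ s ∈ Set.uIoc r (2*r),
        ‖g s - ψ s‖ ≤ r ^ (-a - 1) * (ε' * K₁ * h r) := by
      rw [Set.uIoc_of_le hr2]
      intro s hs
      have hs0 : (0:ℝ) < s := lt_trans hr0 hs.1
      have hsR : R ≤ s := le_trans hrR hs.1.le
      obtain ⟨-, he1, he2, hfs⟩ := hRa s hsR
      have hhs : 0 < h s := hh_pos s hs0
      have hP : (0:ℝ) < s ^ (-a - 1) := Real.rpow_pos_of_pos hs0 _
      have hPr : s ^ (-a - 1) ≤ r ^ (-a - 1) :=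
        Real.rpow_le_rpow_of_nonpos hr0 hs.1.le (by linarith)
      have hψeq : ψ s = A * (s ^ (-a - 1) * ((s / r) ^ b * h r)) := by
        simp only [hψ]
        rw [Real.div_rpow hs0.le hr0.le]
        rw [show (-b:ℝ) = 0 - b by ring, Real.rpow_sub hr0, Real.rpow_zero]
        have : s ^ (b - a - 1) = s ^ (-a-1) * s ^ b := by
          rw [← Real.rpow_add hs0]; ring_nf
        rw [this]
        field_simp
      have e1 : |g s - A * (s ^ (-a-1) * h s)| ≤ s ^ (-a-1) * (ε' * (C + 1) * h s) := by
        have : g s - A * (s ^ (-a-1) * h s) = s ^ (-a-1) * (ε₁ s * f s + ε₂ s * h s) := by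
          simp only [hg]; ring
        rw [this, abs_mul, abs_of_pos hP]
        apply mul_le_mul_of_nonneg_left _ hP.le
        calc |ε₁ s * f s + ε₂ s * h s| ≤ |ε₁ s| * |f s| + |ε₂ s| * h s := by
              refine le_trans (abs_add_le _ _) ?_
              rw [abs_mul, abs_mul, abs_of_pos hhs]
          _ ≤ ε' * (C * h s) + ε' * h s := by
              have h1 : |ε₁ s| * |f s| ≤ ε' * (C * h s) :=
                mul_le_mul he1 hfs (abs_nonneg _) hε'pos.le
              have h2 : |ε₂ s| * h s ≤ ε' * h s :=
                mul_le_mul_of_nonneg_right he2 hhs.le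
              linarith
          _ = ε' * (C + 1) * h s := by ring
      have e2 : |A * (s ^ (-a-1) * h s) - ψ s| ≤ s ^ (-a-1) * (|A| * (ε' * h r)) := by
        rw [hψeq]
        have : A * (s ^ (-a-1) * h s) - A * (s ^ (-a-1) * ((s / r) ^ b * h r))
            = A * s ^ (-a-1) * (h s - (s / r) ^ b * h r) := by ring
        rw [this, abs_mul, abs_mul, abs_of_pos hP]
        have := happrox s hs.1.le hs.2
        calc |A| * s ^ (-a-1) * |h s - (s / r) ^ b * h r| ≤ |A| * s ^ (-a-1) * (ε' * h r) := by
              apply mul_le_mul_of_nonneg_left this (by positivity)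
          _ = s ^ (-a-1) * (|A| * (ε' * h r)) := by ring
      rw [Real.norm_eq_abs]
      have hsb : h s ≤ (B + 1) * h r := hub' s hs.1.le hs.2
      calc |g s - ψ s| ≤ |g s - A * (s ^ (-a-1) * h s)| + |A * (s ^ (-a-1) * h s) - ψ s| := by
            have := abs_sub_le (g s) (A * (s ^ (-a-1) * h s)) (ψ s)
            linarith
        _ ≤ s ^ (-a-1) * (ε' * (C + 1) * h s) + s ^ (-a-1) * (|A| * (ε' * h r)) :=
            add_le_add e1 e2
        _ ≤ s ^ (-a-1) * (ε' * (C + 1) * ((B + 1) * h r)) + s ^ (-a-1) * (|A| * (ε' * h r)) := by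
            have h3 : ε' * (C + 1) * h s ≤ ε' * (C + 1) * ((B + 1) * h r) :=
              mul_le_mul_of_nonneg_left hsb (by positivity)
            have h4 := mul_le_mul_of_nonneg_left h3 hP.le
            linarith
        _ ≤ r ^ (-a-1) * (ε' * (C + 1) * ((B + 1) * h r)) + r ^ (-a-1) * (|A| * (ε' * h r)) := by
            have hX1 : (0:ℝ) ≤ ε' * (C + 1) * ((B + 1) * h r) :=
              mul_nonneg (by positivity) (mul_nonneg (by linarith) hhr.le)
            have hX2 : (0:ℝ) ≤ |A| * (ε' * h r) :=
              mul_nonneg (abs_nonneg _) (mul_nonneg hε'pos.le hhr.le)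
            have h5 := mul_le_mul_of_nonneg_right hPr hX1
            have h6 := mul_le_mul_of_nonneg_right hPr hX2
            linarith
        _ = r ^ (-a-1) * (ε' * K₁ * h r) := by rw [hK₁]; ring
    -- integral difference bound
    have hErr : |(f (2*r) * (2*r) ^ (-a) - f r * r ^ (-a)) - A * h r * r ^ (-a) * I'|
        ≤ ε' * K₁ * h r * r ^ (-a) := by
      rw [← hFTC, ← hψval, ← intervalIntegral.integral_sub hgInt hψInt]
      have := intervalIntegral.norm_integral_le_of_norm_le_const hdiffbd
      rw [Real.norm_eq_abs] at this
      have habs2 : |2 * r - r| = r := by rw [abs_of_pos (by linarith)]; ring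
      rw [habs2] at this
      calc |∫ s in r..(2*r), (g s - ψ s)| ≤ r ^ (-a - 1) * (ε' * K₁ * h r) * r := this
        _ = ε' * K₁ * h r * r ^ (-a) := by
            rw [show r ^ (-a-1) * (ε' * K₁ * h r) * r = (r ^ (-a-1) * r) * (ε' * K₁ * h r) by ring,
              ← Real.rpow_add_one (ne_of_gt hr0)]
            ring_nf
    -- algebra
    have hq : |h (2*r) / h r - B| ≤ ε' := by
      have := ((hRa r hrR).1) 2 ⟨by norm_num, le_refl 2⟩
      rw [hB]
      exact this
    set q : ℝ := h (2*r) / h r with hqdef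
    have hqpos : 0 < q := div_pos hh2r hhr
    have hqlb : B / 2 ≤ q := by
      have h1 := (abs_le.mp hq).1
      linarith only [h1, hε'B]
    set ρ : ℝ := (2:ℝ) ^ a * h r / h (2*r) with hρ
    have h2apos : (0:ℝ) < (2:ℝ) ^ a := Real.rpow_pos_of_pos (by norm_num) a
    have hρq : ρ = (2:ℝ) ^ a / q := by
      rw [hρ, hqdef]
      field_simp
    have hκq : κ = (2:ℝ) ^ a / B := by
      rw [hκ, hB, Real.rpow_sub (by norm_num)]
    have hρκ : |ρ - κ| ≤ ε' * K₂ := by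
      rw [hρq, hκq]
      have hBq : (2:ℝ)^a / q - (2:ℝ)^a / B = (2:ℝ)^a * (B - q) / (q * B) := by
        field_simp
      rw [hBq, abs_div, abs_mul, abs_of_pos h2apos, abs_of_pos (mul_pos hqpos hBpos),
        div_le_iff₀ (mul_pos hqpos hBpos)]
      have e1 : |B - q| ≤ ε' := by rw [abs_sub_comm]; exact hq
      have e3 : (2:ℝ)^a ≤ K₂ * (q * B) := by
        rw [hK₂, div_mul_eq_mul_div, le_div_iff₀ (by positivity)]
        have hBB : B * B ≤ 2 * (q * B) := by
          have := mul_le_mul_of_nonneg_right hqlb hBpos.le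
          linarith only [this]
        calc (2:ℝ)^a * (B * B) ≤ (2:ℝ)^a * (2 * (q * B)) :=
              mul_le_mul_of_nonneg_left hBB h2apos.le
          _ = (2:ℝ)^a * 2 * (q * B) := by ring
      calc (2:ℝ)^a * |B - q| ≤ (2:ℝ)^a * ε' := mul_le_mul_of_nonneg_left e1 h2apos.le
        _ = ε' * (2:ℝ)^a := by ring
        _ ≤ ε' * (K₂ * (q * B)) := mul_le_mul_of_nonneg_left e3 hε'pos.le
        _ = ε' * K₂ * (q * B) := by ring
    set E : ℝ := f (2*r) * (2*r) ^ (-a) - f r * r ^ (-a) - A * h r * r ^ (-a) * I' with hEdef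
    have hE : |E| ≤ ε' * K₁ * h r * r ^ (-a) := by
      rw [hEdef]
      calc |f (2*r) * (2*r) ^ (-a) - f r * r ^ (-a) - A * h r * r ^ (-a) * I'|
          = |(f (2*r) * (2*r) ^ (-a) - f r * r ^ (-a)) - A * h r * r ^ (-a) * I'| := by
            ring_nf
        _ ≤ ε' * K₁ * h r * r ^ (-a) := hErr
    have hra1 : r ^ (-a) * r ^ a = 1 := by
      rw [← Real.rpow_add hr0]
      simp
    set Err' : ℝ := E * r ^ a / h r with hErrdef
    have hErr' : |Err'| ≤ ε' * K₁ := by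
      rw [hErrdef, abs_div, abs_mul, abs_of_pos (Real.rpow_pos_of_pos hr0 a),
        abs_of_pos hhr, div_le_iff₀ hhr]
      calc |E| * r ^ a ≤ (ε' * K₁ * h r * r ^ (-a)) * r ^ a :=
            mul_le_mul_of_nonneg_right hE (Real.rpow_pos_of_pos hr0 a).le
        _ = ε' * K₁ * h r * (r ^ (-a) * r ^ a) := by ring
        _ = ε' * K₁ * h r := by rw [hra1]; ring
    set X : ℝ := u r with hX
    have hu2 : u (2*r) = (X + A * I' + Err') * ρ := by
      have hfd : f (2*r) = (f r * r ^ (-a) + A * h r * r ^ (-a) * I' + E) * ((2:ℝ)^a * r^a) := by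
        have h1 : f r * r ^ (-a) + A * h r * r ^ (-a) * I' + E = f (2*r) * (2*r) ^ (-a) := by
          rw [hEdef]; ring
        rw [h1]
        symm
        have h2 : ((2:ℝ)*r) ^ (-a) * ((2:ℝ)^a * r^a) = 1 := by
          rw [← Real.mul_rpow (by norm_num) hr0.le, ← Real.rpow_add (by positivity)]
          simp
        calc f (2*r) * (2*r) ^ (-a) * ((2:ℝ)^a * r^a)
            = f (2*r) * (((2:ℝ)*r) ^ (-a) * ((2:ℝ)^a * r^a)) := by ring
          _ = f (2*r) := by rw [h2, mul_one]
      have hnum : (f r * r ^ (-a) + A * h r * r ^ (-a) * I' + E) * ((2:ℝ)^a * r^a)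
          = (f r + A * I' * h r + E * r ^ a) * (2:ℝ)^a := by
        linear_combination ((f r + A * h r * I') * (2:ℝ)^a) * hra1
      simp only [hu, hX, hρ, hErrdef]
      rw [hfd, hnum]
      field_simp
    have h2ab1 : κ * (2:ℝ) ^ (b - a) = 1 := by
      rw [hκ, ← Real.rpow_add (by norm_num)]
      norm_num
    have hcancel : κ * (A * I') = c * (1 - κ) := by
      rw [hc, hI']
      field_simp
      linear_combination A * h2ab1
    have hid : v (2*r) - κ * v r = (ρ - κ) * (X + A * I' + Err') + κ * Err' := by
      simp only [hv, ← hX]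
      rw [hu2]
      linear_combination hcancel
    rw [hid]
    have hXb : |X + A * I' + Err'| ≤ C + |A| * I' + K₁ := by
      have h2 : |A * I'| = |A| * I' := by rw [abs_mul, abs_of_pos hI'pos]
      have h3 : |Err'| ≤ K₁ := le_trans hErr' (by
        have := mul_le_mul_of_nonneg_right hε'1 hK₁pos.le
        linarith only [this])
      calc |X + A * I' + Err'| ≤ |X + A * I'| + |Err'| := abs_add_le _ _
        _ ≤ |X| + |A * I'| + |Err'| := by linarith only [abs_add_le X (A * I')]
        _ ≤ C + |A| * I' + K₁ := by rw [h2]; linarith only [hXC, h3]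
    calc |(ρ - κ) * (X + A * I' + Err') + κ * Err'|
        ≤ |ρ - κ| * |X + A * I' + Err'| + κ * |Err'| := by
          refine le_trans (abs_add_le _ _) ?_
          rw [abs_mul, abs_mul, abs_of_pos hκ0]
      _ ≤ (ε' * K₂) * (C + |A| * I' + K₁) + 1 * (ε' * K₁) := by
          have h1 := mul_le_mul hρκ hXb (abs_nonneg _) (by positivity)
          have h2 := mul_le_mul hκ1.le hErr' (abs_nonneg _) zero_le_one
          linarith only [h1, h2]
      _ = ε' * K₃ := by rw [hK₃]; ring
      _ ≤ δ := (le_div_iff₀ hK₃pos).mp hε'δ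
  -- assembly
  have hvb : ∀ᶠ r in atTop, |v r| ≤ C + |c| + 1 := by
    filter_upwards [hub] with r hr
    simp only [hv]
    calc |u r - c| ≤ |u r| + |c| := abs_sub _ _
      _ ≤ C + |c| + 1 := by linarith
  have hrec : ∀ δ > (0:ℝ), ∀ᶠ r in atTop, |v (2 * r)| ≤ κ * |v r| + δ := by
    intro δ hδ
    filter_upwards [hkeyrec δ hδ] with r hr
    calc |v (2 * r)| = |κ * v r + (v (2 * r) - κ * v r)| := by ring_nf
      _ ≤ |κ * v r| + |v (2 * r) - κ * v r| := abs_add_le _ _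
      _ ≤ κ * |v r| + δ := by
          rw [abs_mul, abs_of_pos hκ0]
          linarith
  have htv := iterate_contract v κ (C + |c| + 1) hκ0 hκ1 (by positivity) hvb hrec
  have hfinal : Tendsto (fun r => v r + c) atTop (nhds (0 + c)) := htv.add_const c
  rw [zero_add] at hfinal
  apply hfinal.congr
  intro r
  simp only [hv, hu]
  ring
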